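/- Let (Xₙ) be a martingale difference sequence with respect to a filtration (Fₙ) on a probability space (Ω, F, P), with |Xₙ| ≤ c almost surely for a constant c > 0. Then for all x, y > 0, P( ∃ n : Σ_{i=1}^n Xᵢ ≥ x and Σ_{i=1}^n E[Xᵢ² | F_{i−1}] ≤ y ) ≤ exp( −x² / (2(xc + y)) ). -/

import Mathlib

open MeasureTheory Filter

open Nat in
lemma expBound {r v : ℝ} (hr : r < 1) (hvr : |v| ≤ r) :
    Real.exp v ≤ 1 + v + v ^ 2 / (2 * (1 - r)) := by
  have hr0 : 0 ≤ r := le_trans (abs_nonneg v) hvr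
  have hsum : Summable (fun n : ℕ => v ^ n / n !) := Real.summable_pow_div_factorial v
  have hexp : Real.exp v = ∑' n : ℕ, v ^ n / n ! := by
    rw [Real.exp_eq_exp_ℝ, NormedSpace.exp_eq_tsum_div]
  have hsplit : (∑ i ∈ Finset.range 2, v ^ i / i !) + ∑' k : ℕ, v ^ (k + 2) / (k + 2)! =
      ∑' n : ℕ, v ^ n / n ! := Summable.sum_add_tsum_nat_add 2 hsum
  have hgeo : Summable (fun k : ℕ => v ^ 2 / 2 * r ^ k) :=
    (summable_geometric_of_lt_one hr0 hr).mul_left _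
  have hterm : ∀ k : ℕ, v ^ (k + 2) / (k + 2)! ≤ v ^ 2 / 2 * r ^ k := by
    intro k
    have h1 : v ^ (k + 2) / ((k + 2)! : ℝ) ≤ |v| ^ (k + 2) / ((k + 2)! : ℝ) := by
      have h := le_abs_self (v ^ (k + 2))
      rw [abs_pow] at h
      exact div_le_div_of_nonneg_right h (by positivity)
    have h2 : (2 : ℝ) ≤ ((k + 2)! : ℝ) := by
      exact_mod_cast le_trans (by omega) (Nat.self_le_factorial (k + 2))
    have h3 : |v| ^ (k + 2) / ((k + 2)! : ℝ) ≤ |v| ^ (k + 2) / 2 :=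
      div_le_div_of_nonneg_left (by positivity) (by norm_num) h2
    have h4 : |v| ^ (k + 2) = v ^ 2 * |v| ^ k := by
      rw [pow_add, sq_abs, mul_comm]
    have h5 : |v| ^ k ≤ r ^ k := pow_le_pow_left₀ (abs_nonneg v) hvr k
    calc v ^ (k + 2) / ((k + 2)! : ℝ) ≤ |v| ^ (k + 2) / 2 := le_trans h1 h3
      _ = v ^ 2 / 2 * |v| ^ k := by rw [h4]; ring
      _ ≤ v ^ 2 / 2 * r ^ k := by
          apply mul_le_mul_of_nonneg_left h5 (by positivity)
  have htail : ∑' k : ℕ, v ^ (k + 2) / (k + 2)! ≤ v ^ 2 / (2 * (1 - r)) := by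
    have hsum2 : Summable (fun k : ℕ => v ^ (k + 2) / (k + 2)!) :=
      (summable_nat_add_iff 2).mpr hsum
    calc ∑' k : ℕ, v ^ (k + 2) / (k + 2)! ≤ ∑' k : ℕ, v ^ 2 / 2 * r ^ k :=
          Summable.tsum_le_tsum hterm hsum2 hgeo
      _ = v ^ 2 / 2 * (1 - r)⁻¹ := by
          rw [tsum_mul_left, tsum_geometric_of_lt_one hr0 hr]
      _ = v ^ 2 / (2 * (1 - r)) := by
          rw [← div_eq_mul_inv, div_div]
  have : Real.exp v = 1 + v + ∑' k : ℕ, v ^ (k + 2) / (k + 2)! := by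
    rw [hexp, ← hsplit]
    simp [Finset.sum_range_succ]
  rw [this]
  linarith

lemma sumIccSucc (f : ℕ → ℝ) (n : ℕ) :
    ∑ i ∈ Finset.Icc 1 (n + 1), f i = (∑ i ∈ Finset.Icc 1 n, f i) + f (n + 1) := by
  rw [← Finset.insert_Icc_right_eq_Icc_add_one (by omega : 1 ≤ n + 1),
    Finset.sum_insert (by simp [Finset.mem_Icc])]
  ring

/-- Peña's exponential inequality for martingale difference sequences bounded by a constant:
`P(∃ n, Σ_{i=1}^n Xᵢ ≥ x and Σ_{i=1}^n E[Xᵢ²|F_{i-1}] ≤ y) ≤ exp(−x²/(2(xc+y)))`. -/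
theorem stmt2 {Ω : Type*} {m : MeasurableSpace Ω} {μ : Measure Ω} [IsProbabilityMeasure μ]
    (ℱ : Filtration ℕ m) (X : ℕ → Ω → ℝ) (c : ℝ) (hc : 0 < c)
    (hadapted : ∀ n, 1 ≤ n → Measurable[ℱ n] (X n))
    (hmds : ∀ n, 1 ≤ n → μ[X n | ℱ (n - 1)] =ᵐ[μ] 0)
    (hbdd : ∀ n, 1 ≤ n → ∀ᵐ ω ∂μ, |X n ω| ≤ c)
    (x y : ℝ) (hx : 0 < x) (hy : 0 < y) :
    μ {ω | ∃ n, 1 ≤ n ∧ x ≤ ∑ i ∈ Finset.Icc 1 n, X i ω ∧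
        ∑ i ∈ Finset.Icc 1 n, (μ[fun w => (X i w) ^ 2 | ℱ (i - 1)]) ω ≤ y}
      ≤ ENNReal.ofReal (Real.exp (-(x ^ 2) / (2 * (x * c + y)))) := by
  have hxc : (0:ℝ) < x * c + y := by positivity
  set l : ℝ := x / (x * c + y) with hl
  have hl0 : 0 < l := by positivity
  have hlc : l * c < 1 := by
    rw [hl, div_mul_eq_mul_div, div_lt_one hxc]; linarith
  have hlc0 : 0 < 1 - l * c := by linarith
  set q : ℝ := l ^ 2 / (2 * (1 - l * c)) with hq
  have hq0 : 0 ≤ q := by positivity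
  set S : ℕ → Ω → ℝ := fun n ω => ∑ i ∈ Finset.Icc 1 n, X i ω with hS
  set V : ℕ → Ω → ℝ :=
    fun n ω => ∑ i ∈ Finset.Icc 1 n, (μ[fun w => (X i w) ^ 2 | ℱ (i - 1)]) ω with hV
  set Z : ℕ → Ω → ℝ := fun n ω => Real.exp (l * S n ω - q * V n ω) with hZ
  -- measurability
  have hSm : ∀ n, Measurable[ℱ n] (S n) := by
    intro n
    apply Finset.measurable_sum
    intro i hi
    simp only [Finset.mem_Icc] at hi
    exact (hadapted i hi.1).mono (ℱ.mono hi.2) le_rfl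
  have hVm : ∀ n, Measurable[ℱ n] (V n) := by
    intro n
    apply Finset.measurable_sum
    intro i hi
    simp only [Finset.mem_Icc] at hi
    exact stronglyMeasurable_condExp.measurable.mono
      (ℱ.mono (le_trans (Nat.sub_le i 1) hi.2)) le_rfl
  have hZm : ∀ n, Measurable[ℱ n] (Z n) := fun n =>
    Real.measurable_exp.comp (((hSm n).const_mul l).sub ((hVm n).const_mul q))
  -- integrability of X and X²
  have hXint : ∀ i, 1 ≤ i → Integrable (X i) μ := by
    intro i hi
    refine (integrable_const c).mono'
      (((hadapted i hi).mono (ℱ.le i) le_rfl).aestronglyMeasurable) ?_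
    filter_upwards [hbdd i hi] with ω hω using by rwa [Real.norm_eq_abs]
  have hX2int : ∀ i, 1 ≤ i → Integrable (fun ω => X i ω ^ 2) μ := by
    intro i hi
    refine (integrable_const (c ^ 2)).mono'
      ((((hadapted i hi).mono (ℱ.le i) le_rfl).pow_const 2).aestronglyMeasurable) ?_
    filter_upwards [hbdd i hi] with ω hω
    rw [Real.norm_eq_abs, abs_pow]
    exact pow_le_pow_left₀ (abs_nonneg _) hω 2
  -- a.e. bounds on S, V, Z
  have hVnn : ∀ᵐ ω ∂μ, ∀ n, 0 ≤ V n ω := by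
    rw [ae_all_iff]
    intro n
    have h : ∀ i, 1 ≤ i → (0:Ω → ℝ) ≤ᵐ[μ] μ[fun w => (X i w) ^ 2 | ℱ (i - 1)] := fun i _ =>
      condExp_nonneg (Eventually.of_forall fun ω => sq_nonneg _)
    have h2 : ∀ᵐ ω ∂μ, ∀ i, 1 ≤ i → 0 ≤ (μ[fun w => (X i w) ^ 2 | ℱ (i - 1)]) ω := by
      rw [ae_all_iff]
      intro i
      by_cases hi : 1 ≤ i
      · filter_upwards [h i hi] with ω hω using fun _ => hω
      · filter_upwards with ω using fun hi' => absurd hi' hi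
    filter_upwards [h2] with ω hω
    exact Finset.sum_nonneg fun i hi => hω i (Finset.mem_Icc.mp hi).1
  have hXb : ∀ᵐ ω ∂μ, ∀ i, 1 ≤ i → |X i ω| ≤ c := by
    rw [ae_all_iff]
    intro i
    by_cases hi : 1 ≤ i
    · filter_upwards [hbdd i hi] with ω hω using fun _ => hω
    · filter_upwards with ω using fun hi' => absurd hi' hi
  have hSb : ∀ᵐ ω ∂μ, ∀ n, S n ω ≤ n * c := by
    filter_upwards [hXb] with ω hω n
    calc S n ω ≤ ∑ i ∈ Finset.Icc 1 n, c := by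
          apply Finset.sum_le_sum
          intro i hi
          exact le_trans (le_abs_self _) (hω i (Finset.mem_Icc.mp hi).1)
      _ = n * c := by
          rw [Finset.sum_const, Nat.card_Icc]
          simp [nsmul_eq_mul]
  have hZb : ∀ n, ∀ᵐ ω ∂μ, Z n ω ≤ Real.exp (l * (n * c)) := by
    intro n
    filter_upwards [hSb, hVnn] with ω h1 h2
    apply Real.exp_le_exp.mpr
    have := h1 n
    have := h2 n
    nlinarith
  have hZint : ∀ n, Integrable (Z n) μ := by
    intro n
    refine (integrable_const (Real.exp (l * (n * c)))).mono'
      ((hZm n).mono (ℱ.le n) le_rfl).aestronglyMeasurable ?_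
    filter_upwards [hZb n] with ω hω
    rwa [Real.norm_eq_abs, abs_of_pos (Real.exp_pos _)]
  -- supermartingale property
  have hsuper : Supermartingale Z ℱ μ := by
    refine supermartingale_nat (fun n => (hZm n).stronglyMeasurable) hZint ?_
    intro n
    have hn1 : 1 ≤ n + 1 := Nat.succ_le_succ (Nat.zero_le n)
    set g : Ω → ℝ := μ[fun w => (X (n+1) w) ^ 2 | ℱ n] with hg
    have hgF : (μ[fun w => (X (n+1) w) ^ 2 | ℱ (n + 1 - 1)]) = g := rfl
    have hgnn : (0:Ω → ℝ) ≤ᵐ[μ] g :=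
      condExp_nonneg (Eventually.of_forall fun ω => sq_nonneg _)
    set W : Ω → ℝ := fun ω => Real.exp (l * S n ω - q * V n ω - q * g ω) with hW
    have hWm : Measurable[ℱ n] W :=
      Real.measurable_exp.comp ((((hSm n).const_mul l).sub ((hVm n).const_mul q)).sub
        (stronglyMeasurable_condExp.measurable.const_mul q))
    have hZeq : Z (n+1) = W * fun ω => Real.exp (l * X (n+1) ω) := by
      funext ω
      show Real.exp (l * S (n+1) ω - q * V (n+1) ω) = _
      have h1 : S (n+1) ω = S n ω + X (n+1) ω := sumIccSucc (fun i => X i ω) n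
      have h2 : V (n+1) ω = V n ω + g ω := by
        have := sumIccSucc (fun i => (μ[fun w => (X i w) ^ 2 | ℱ (i - 1)]) ω) n
        simpa [hgF] using this
      rw [Pi.mul_apply, h1, h2, ← Real.exp_add]
      ring_nf
    have hEint : Integrable (fun ω => Real.exp (l * X (n+1) ω)) μ := by
      refine (integrable_const (Real.exp (l * c))).mono'
        (Real.measurable_exp.comp
          (((hadapted (n+1) hn1).mono (ℱ.le (n+1)) le_rfl).const_mul l)).aestronglyMeasurable ?_
      filter_upwards [hbdd (n+1) hn1] with ω hω
      rw [Real.norm_eq_abs, abs_of_pos (Real.exp_pos _)]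
      apply Real.exp_le_exp.mpr
      have : X (n+1) ω ≤ c := le_trans (le_abs_self _) hω
      nlinarith
    have hmul : μ[Z (n+1) | ℱ n] =ᵐ[μ]
        W * μ[fun ω => Real.exp (l * X (n+1) ω) | ℱ n] := by
      rw [hZeq]
      exact condExp_mul_of_stronglyMeasurable_left hWm.stronglyMeasurable
        (hZeq ▸ hZint (n+1)) hEint
    -- conditional bound
    have hpt : (fun ω => Real.exp (l * X (n+1) ω)) ≤ᵐ[μ]
        fun ω => 1 + l * X (n+1) ω + q * X (n+1) ω ^ 2 := by
      filter_upwards [hbdd (n+1) hn1] with ω hω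
      have hv : |l * X (n+1) ω| ≤ l * c := by
        rw [abs_mul, abs_of_pos hl0]
        exact mul_le_mul_of_nonneg_left hω hl0.le
      have h := expBound hlc hv
      have heq : (l * X (n+1) ω) ^ 2 / (2 * (1 - l * c)) = q * X (n+1) ω ^ 2 := by
        rw [hq]; ring
      rw [heq] at h
      exact h
    have hRint : Integrable (fun ω => 1 + l * X (n+1) ω + q * X (n+1) ω ^ 2) μ := by
      exact ((integrable_const 1).add ((hXint (n+1) hn1).const_mul l)).add
        ((hX2int (n+1) hn1).const_mul q)
    have hcondle : μ[fun ω => Real.exp (l * X (n+1) ω) | ℱ n] ≤ᵐ[μ]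
        μ[fun ω => 1 + l * X (n+1) ω + q * X (n+1) ω ^ 2 | ℱ n] :=
      condExp_mono hEint hRint hpt
    have hcondeq : μ[fun ω => 1 + l * X (n+1) ω + q * X (n+1) ω ^ 2 | ℱ n] =ᵐ[μ]
        fun ω => 1 + q * g ω := by
      have e1 : μ[fun ω => 1 + l * X (n+1) ω + q * X (n+1) ω ^ 2 | ℱ n] =ᵐ[μ]
          μ[fun ω => 1 + l * X (n+1) ω | ℱ n] + μ[fun ω => q * X (n+1) ω ^ 2 | ℱ n] :=
        condExp_add ((integrable_const 1).add ((hXint (n+1) hn1).const_mul l))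
          ((hX2int (n+1) hn1).const_mul q) _
      have e2 : μ[fun ω => 1 + l * X (n+1) ω | ℱ n] =ᵐ[μ]
          μ[fun _ => (1:ℝ) | ℱ n] + μ[fun ω => l * X (n+1) ω | ℱ n] :=
        condExp_add (integrable_const 1) ((hXint (n+1) hn1).const_mul l) _
      have e3 : μ[fun _ => (1:ℝ) | ℱ n] = fun _ => (1:ℝ) := condExp_const (ℱ.le n) 1
      have e4 : μ[fun ω => l * X (n+1) ω | ℱ n] =ᵐ[μ] fun ω => l * (μ[X (n+1) | ℱ n]) ω := by
        have := condExp_smul (μ := μ) (m := ℱ n) l (X (n+1))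
        simpa [Pi.smul_def, smul_eq_mul] using this
      have e5 : μ[X (n+1) | ℱ n] =ᵐ[μ] 0 := hmds (n+1) hn1
      have e6 : μ[fun ω => q * X (n+1) ω ^ 2 | ℱ n] =ᵐ[μ] fun ω => q * g ω := by
        have := condExp_smul (μ := μ) (m := ℱ n) q (fun ω => X (n+1) ω ^ 2)
        simpa [Pi.smul_def, smul_eq_mul, hg] using this
      filter_upwards [e1, e2, e4, e5, e6] with ω h1 h2 h4 h5 h6
      simp only [Pi.add_apply] at h1 h2
      rw [h1, h2, h4, h6, e3]
      simp only [Pi.zero_apply] at h5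
      rw [h5]
      ring
    -- combine
    filter_upwards [hmul, hcondle, hcondeq, hgnn] with ω h1 h2 h3 h4
    rw [h1]
    simp only [Pi.mul_apply]
    calc W ω * (μ[fun ω => Real.exp (l * X (n+1) ω) | ℱ n]) ω
        ≤ W ω * (1 + q * g ω) := by
          apply mul_le_mul_of_nonneg_left _ (Real.exp_pos _).le
          rw [← h3]; exact h2
      _ ≤ W ω * Real.exp (q * g ω) := by
          apply mul_le_mul_of_nonneg_left _ (Real.exp_pos _).le
          have := Real.add_one_le_exp (q * g ω)
          linarith
      _ = Z n ω := by
          show Real.exp _ * _ = Real.exp _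
          rw [← Real.exp_add]
          ring_nf
  -- per-horizon bound via optional stopping
  set A : ℕ → Set Ω := fun N => {ω | ∃ n ≤ N, x ≤ S n ω ∧ V n ω ≤ y} with hA
  have halg : l * x - q * y = x ^ 2 / (2 * (x * c + y)) := by
    have h1 : 1 - l * c = y / (x * c + y) := by
      rw [hl]; field_simp; ring
    rw [hq, h1, hl]
    field_simp
    ring
  have hAbound : ∀ N : ℕ, μ (A N)
      ≤ ENNReal.ofReal (Real.exp (-(x ^ 2) / (2 * (x * c + y)))) := by
    intro N
    set C : ℕ → Set Ω := fun n => {ω | x ≤ S n ω ∧ V n ω ≤ y} with hC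
    have hCm : ∀ n, MeasurableSet[ℱ n] (C n) := fun n =>
      (measurableSet_le measurable_const (hSm n)).inter
        (measurableSet_le (hVm n) measurable_const)
    set U : ℕ → Ω → ℝ := fun n => (C n).indicator (fun _ => 1) with hU
    have hUadp : Adapted ℱ U := fun n => measurable_const.indicator (hCm n)
    have hUmem : ∀ n ω, ω ∈ C n → U n ω ∈ ({1} : Set ℝ) := by
      intro n ω h
      simp [hU, Set.indicator_of_mem h]
    set τ0 : Ω → ℕ := hittingBtwn U {1} 0 N with hτ0def
    set τ : Ω → WithTop ℕ := fun ω => (τ0 ω : ℕ) with hτdef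
    have hτ : IsStoppingTime ℱ τ := hUadp.isStoppingTime_hittingBtwn (measurableSet_singleton 1)
    have hτN : ∀ ω, τ ω ≤ N := fun ω => WithTop.coe_le_coe.mpr (hittingBtwn_le ω)
    have hneg : Submartingale (-Z) ℱ μ := hsuper.neg
    have hSVeq : stoppedValue (-Z) τ = -stoppedValue Z τ := by
      funext ω
      simp [stoppedValue]
    have hintτ : Integrable (stoppedValue Z τ) μ := by
      have h := (hneg.integrable_stoppedValue hτ hτN).neg
      rw [hSVeq] at h
      simpa using h
    have hZ0 : Z 0 = fun _ => 1 := by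
      funext ω
      have hempty : Finset.Icc 1 0 = (∅ : Finset ℕ) := Finset.Icc_eq_empty (by omega)
      simp [hZ, hS, hV, hempty]
    have hEle : ∫ ω, stoppedValue Z τ ω ∂μ ≤ 1 := by
      have h := hneg.expected_stoppedValue_mono (isStoppingTime_const ℱ 0) hτ
        (fun ω => WithTop.coe_le_coe.mpr (Nat.zero_le _)) hτN
      have h0 : stoppedValue (-Z) (fun _ => WithTop.some (0:ℕ)) = fun _ => (-1 : ℝ) := by
        funext ω
        simp [stoppedValue, hZ0]
      rw [hSVeq, h0] at h
      have hconst : ∫ (_ : Ω), (-1 : ℝ) ∂μ = -1 := by simp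
      have hneg2 : ∫ ω, (-(stoppedValue Z τ)) ω ∂μ = - ∫ ω, stoppedValue Z τ ω ∂μ := by
        simp only [Pi.neg_apply]
        exact integral_neg _
      rw [hconst] at h
      rw [hneg2] at h
      linarith
    set K : ℝ := Real.exp (l * x - q * y) with hK
    have hKpos : 0 < K := Real.exp_pos _
    have hAeq : A N = ⋃ (n : ℕ) (_ : n ≤ N), C n := by
      ext ω
      simp only [hA, hC, Set.mem_setOf_eq, Set.mem_iUnion]
      tauto
    have hAm : MeasurableSet (A N) := by
      rw [hAeq]
      exact MeasurableSet.iUnion fun n => MeasurableSet.iUnion fun _ => ℱ.le n _ (hCm n)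
    have hKle : ∀ ω ∈ A N, K ≤ stoppedValue Z τ ω := by
      intro ω hω
      obtain ⟨n, hn, hx1, hy1⟩ := hω
      have hex : ∃ j ∈ Set.Icc 0 N, U j ω ∈ ({1} : Set ℝ) :=
        ⟨n, ⟨Nat.zero_le n, hn⟩, hUmem n ω ⟨hx1, hy1⟩⟩
      have hmem := stoppedValue_hittingBtwn_mem hex
      have hωC : ω ∈ C (τ0 ω) := by
        by_contra h
        change U (τ0 ω) ω ∈ ({1} : Set ℝ) at hmem
        simp [hU, Set.indicator_of_notMem h] at hmem
      obtain ⟨hx2, hy2⟩ := hωC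
      show K ≤ Z (τ0 ω) ω
      rw [hK, hZ]
      apply Real.exp_le_exp.mpr
      have h1 : l * x ≤ l * S (τ0 ω) ω := mul_le_mul_of_nonneg_left hx2 hl0.le
      have h2 : q * V (τ0 ω) ω ≤ q * y := mul_le_mul_of_nonneg_left hy2 hq0
      linarith
    have hfin : μ (A N) ≠ ⊤ := measure_ne_top μ _
    have hge := setIntegral_ge_of_const_le hAm hfin hKle hintτ.integrableOn
    have hle2 : ∫ ω in A N, stoppedValue Z τ ω ∂μ ≤ ∫ ω, stoppedValue Z τ ω ∂μ := by
      apply setIntegral_le_integral hintτ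
      apply Eventually.of_forall
      intro ω
      show (0:ℝ) ≤ Z (τ0 ω) ω
      rw [hZ]
      exact (Real.exp_pos _).le
    have htoReal : (μ (A N)).toReal ≤ Real.exp (-(x ^ 2) / (2 * (x * c + y))) := by
      have hKK : K * (μ (A N)).toReal ≤ 1 :=
        le_trans (le_of_eq (by rw [smul_eq_mul, Measure.real, mul_comm])) (le_trans hge (le_trans hle2 hEle))
      have h3 : (μ (A N)).toReal ≤ 1 / K := by
        rw [le_div_iff₀ hKpos, mul_comm]
        exact hKK
      have h4 : 1 / K = Real.exp (-(x ^ 2) / (2 * (x * c + y))) := by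
        rw [hK, one_div, ← Real.exp_neg]
        congr 1
        rw [neg_div, halg]
      rwa [h4] at h3
    rw [← ENNReal.ofReal_toReal hfin]
    exact ENNReal.ofReal_le_ofReal htoReal
  -- pass to the union
  have hmono : Monotone A := by
    intro N M h ω hω
    obtain ⟨n, hn, hp⟩ := hω
    exact ⟨n, le_trans hn h, hp⟩
  have hsub : {ω | ∃ n, 1 ≤ n ∧ x ≤ ∑ i ∈ Finset.Icc 1 n, X i ω ∧
      ∑ i ∈ Finset.Icc 1 n, (μ[fun w => (X i w) ^ 2 | ℱ (i - 1)]) ω ≤ y} ⊆ ⋃ N, A N := by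
    intro ω hω
    obtain ⟨n, _, h1, h2⟩ := hω
    apply Set.mem_iUnion.mpr
    refine ⟨n, n, le_rfl, ?_, ?_⟩
    · rw [hS]; exact h1
    · rw [hV]; exact h2
  calc μ {ω | ∃ n, 1 ≤ n ∧ x ≤ ∑ i ∈ Finset.Icc 1 n, X i ω ∧
      ∑ i ∈ Finset.Icc 1 n, (μ[fun w => (X i w) ^ 2 | ℱ (i - 1)]) ω ≤ y}
      ≤ μ (⋃ N, A N) := measure_mono hsub
    _ = ⨆ N, μ (A N) := hmono.measure_iUnion
    _ ≤ ENNReal.ofReal (Real.exp (-(x ^ 2) / (2 * (x * c + y)))) := iSup_le hAbound
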